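/- For even positive integers n and k with 4 ≤ k ≤ n, the ratio of binomial coefficients satisfies C(n/2, k/2) / C(n, k) ≤ (k/n)^(k/2). -/
import Mathlib

open Finset

lemma ident (m : ℕ) : ∀ j : ℕ, j ≤ m →
    (m.choose j : ℝ) * ∏ i ∈ Finset.range j, (2*(m:ℝ) - 1 - 2*i) =
    ((2*m).choose (2*j) : ℝ) * ∏ i ∈ Finset.range j, (2*(i:ℝ)+1) := by
  intro j
  induction j with
  | zero => simp
  | succ j IH =>
    intro hj1
    have hj : j ≤ m := Nat.le_of_succ_le hj1
    have IH := IH hj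
    -- nat relations
    have h1n : m.choose (j+1) * (j+1) = m.choose j * (m - j) := Nat.choose_succ_right_eq m j
    have h2n : (2*m).choose (2*j+1) * (2*j+1) = (2*m).choose (2*j) * (2*m - 2*j) :=
      Nat.choose_succ_right_eq (2*m) (2*j)
    have h3n : (2*m).choose (2*j+2) * (2*j+2) = (2*m).choose (2*j+1) * (2*m - (2*j+1)) :=
      Nat.choose_succ_right_eq (2*m) (2*j+1)
    have hle : 2*j+1 ≤ 2*m := by omega
    have h1 : (m.choose (j+1) : ℝ) * (j+1) = (m.choose j : ℝ) * ((m:ℝ) - j) := by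
      have := congrArg (Nat.cast : ℕ → ℝ) h1n
      push_cast [Nat.cast_sub hj] at this
      linarith [this]
    have h2 : ((2*m).choose (2*j+1) : ℝ) * (2*(j:ℝ)+1) = ((2*m).choose (2*j) : ℝ) * (2*(m:ℝ) - 2*j) := by
      have := congrArg (Nat.cast : ℕ → ℝ) h2n
      push_cast [Nat.cast_sub (by omega : 2*j ≤ 2*m)] at this
      linarith [this]
    have h3 : ((2*m).choose (2*j+2) : ℝ) * (2*(j:ℝ)+2) = ((2*m).choose (2*j+1) : ℝ) * (2*(m:ℝ) - 2*j - 1) := by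
      have := congrArg (Nat.cast : ℕ → ℝ) h3n
      push_cast [Nat.cast_sub hle] at this
      linarith [this]
    have h2succ : 2*(j+1) = 2*j+2 := by ring
    rw [h2succ, Finset.prod_range_succ, Finset.prod_range_succ]
    have hjne : ((j:ℝ)+1) ≠ 0 := by positivity
    have hj1ne : (2*(j:ℝ)+1) ≠ 0 := by positivity
    have hj2ne : (2*(j:ℝ)+2) ≠ 0 := by positivity
    have key : (m.choose (j+1) : ℝ) * ((∏ i ∈ Finset.range j, (2*(m:ℝ) - 1 - 2*i)) * (2*(m:ℝ) - 1 - 2*j)) * (((j:ℝ)+1) * ((2*(j:ℝ)+1) * (2*(j:ℝ)+2))) =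
        ((2*m).choose (2*j+2) : ℝ) * ((∏ i ∈ Finset.range j, (2*(i:ℝ)+1)) * (2*(j:ℝ)+1)) * (((j:ℝ)+1) * ((2*(j:ℝ)+1) * (2*(j:ℝ)+2))) := by
      set P := ∏ i ∈ Finset.range j, (2*(m:ℝ) - 1 - 2*i)
      set Q := ∏ i ∈ Finset.range j, (2*(i:ℝ)+1)
      linear_combination (P * (2*(m:ℝ)-1-2*j) * ((2*(j:ℝ)+1)*(2*(j:ℝ)+2))) * h1
        - (Q * (2*(j:ℝ)+1) * (2*(j:ℝ)+1) * ((j:ℝ)+1)) * h3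
        - (Q * (2*(j:ℝ)+1) * ((j:ℝ)+1) * (2*(m:ℝ)-2*(j:ℝ)-1)) * h2
        + (2*((m:ℝ)-j) * (2*(m:ℝ)-2*j-1) * ((2*(j:ℝ)+1)*((j:ℝ)+1))) * IH
    exact mul_right_cancel₀ (by positivity) key

lemma ratio_le (m j : ℕ) (hj : j ≤ m) (hm : 0 < m) (hj0 : 0 < j) :
    (m.choose j : ℝ) / ((2*m).choose (2*j) : ℝ) ≤ ((j:ℝ)/m)^j := by
  have hC2 : 0 < ((2*m).choose (2*j) : ℝ) := by
    exact_mod_cast Nat.choose_pos (by omega : 2*j ≤ 2*m)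
  have hP : ∀ i ∈ Finset.range j, (0:ℝ) < 2*(m:ℝ) - 1 - 2*i := by
    intro i hi
    simp only [Finset.mem_range] at hi
    have h1 : (i:ℝ)+1 ≤ j := by exact_mod_cast hi
    have h2 : (j:ℝ) ≤ m := by exact_mod_cast hj
    linarith
  have hPpos : 0 < ∏ i ∈ Finset.range j, (2*(m:ℝ) - 1 - 2*i) :=
    Finset.prod_pos hP
  have hid := ident m j hj
  -- rewrite P reversed
  have hrefl : ∏ i ∈ Finset.range j, (2*(m:ℝ) - 1 - 2*i) =
      ∏ i ∈ Finset.range j, (2*((m:ℝ)-j) + 2*i + 1) := by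
    rw [← Finset.prod_range_reflect]
    apply Finset.prod_congr rfl
    intro i hi
    simp only [Finset.mem_range] at hi
    have h1 : (↑(j - 1 - i) : ℝ) = (j:ℝ) - 1 - i := by
      have : j - 1 - i = j - 1 - i := rfl
      push_cast [Nat.cast_sub (by omega : i ≤ j - 1), Nat.cast_sub (by omega : 1 ≤ j)]
      ring
    rw [h1]; ring
  -- ratio as product
  have hratio : (m.choose j : ℝ) / ((2*m).choose (2*j) : ℝ) =
      ∏ i ∈ Finset.range j, (2*(i:ℝ)+1) / (2*((m:ℝ)-j) + 2*i + 1) := by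
    have hP'pos : 0 < ∏ i ∈ Finset.range j, (2*((m:ℝ)-j) + 2*i + 1) := hrefl ▸ hPpos
    rw [Finset.prod_div_distrib, div_eq_div_iff (ne_of_gt hC2) (ne_of_gt hP'pos), ← hrefl]
    linarith [hid]
  rw [hratio]
  apply le_trans (Finset.prod_le_prod (fun i hi => ?_) (fun i hi => ?_))
  · rw [Finset.prod_const, Finset.card_range]
  · have hd : (0:ℝ) < 2*((m:ℝ)-j) + 2*i + 1 := by
      have h1 : (j:ℝ) ≤ m := by exact_mod_cast hj
      have h2 : (0:ℝ) ≤ i := Nat.cast_nonneg i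
      linarith
    exact div_nonneg (by positivity) hd.le
  · -- (2i+1)/(2(m-j)+2i+1) ≤ j/m
    simp only [Finset.mem_range] at hi
    have hij : (i:ℝ)+1 ≤ j := by exact_mod_cast hi
    have hjm : (j:ℝ) ≤ m := by exact_mod_cast hj
    have hmpos : (0:ℝ) < m := by exact_mod_cast hm
    have hjpos : (0:ℝ) < j := by exact_mod_cast hj0
    rw [div_le_div_iff₀ (by nlinarith) hmpos]
    nlinarith [mul_nonneg (sub_nonneg.2 hjm) (by nlinarith : (0:ℝ) ≤ 2*(j:ℝ) - 2*i - 1)]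

theorem stmt_0 (n k : ℕ) (hn : Even n) (hk : Even k) (hk4 : 4 ≤ k) (hkn : k ≤ n) :
    ((n / 2).choose (k / 2) : ℝ) / (n.choose k : ℝ) ≤ ((k : ℝ) / n) ^ (k / 2) := by
  obtain ⟨m, hm⟩ := hn
  obtain ⟨j, hj⟩ := hk
  subst hm hj
  have hmm : (m + m) / 2 = m := by omega
  have hjj : (j + j) / 2 = j := by omega
  rw [hmm, hjj]
  have h2m : m + m = 2*m := by ring
  have h2j : j + j = 2*j := by ring
  rw [h2m, h2j] at hkn ⊢
  have hjm : j ≤ m := by omega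
  have hmpos : 0 < m := by omega
  have hjpos : 0 < j := by omega
  have := ratio_le m j hjm hmpos hjpos
  have hfrac : ((2*j : ℕ) : ℝ) / ((2*m : ℕ) : ℝ) = (j:ℝ)/m := by
    push_cast
    rw [mul_div_mul_left]
    norm_num
  rw [hfrac]
  exact this
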